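/- Let w : [0,∞) → [0,∞) be a continuous and non-decreasing function, and let w** denote its greatest convex minorant (the supremum of all convex functions on [0,∞) lying below w). Then for every t ≥ 0 there exists a point a ∈ [0, t] such that w** is affine on the interval [a, t] and w(a) = w**(a). -/

import Mathlib

open Set

/-- An affine function is convex on `[0,∞)`. -/
lemma stmt0_affine_convexOn (c d : ℝ) : ConvexOn ℝ (Ici (0:ℝ)) (fun s => c * s + d) := by
  refine ⟨convex_Ici 0, fun p _ q _ α β hα hβ hαβ => le_of_eq ?_⟩
  simp only [smul_eq_mul]
  linear_combination (-d) * hαβ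

/-- Inside a chord interval, a convex function lies below the chord. -/
lemma stmt0_chord_inside {f : ℝ → ℝ} (hf : ConvexOn ℝ (Ici 0) f) {x y s : ℝ}
    (hx : (0:ℝ) ≤ x) (hxy : x < y) (hsx : x ≤ s) (hsy : s ≤ y) :
    f s ≤ f x + (f y - f x) / (y - x) * (s - x) := by
  have hyx : (0:ℝ) < y - x := by linarith
  rcases eq_or_lt_of_le hsx with rfl | hsx'
  · simp
  rcases eq_or_lt_of_le hsy with rfl | hsy'
  · rw [div_mul_cancel₀ _ (by linarith : s - x ≠ 0)]; linarith
  have h := hf.slope_mono_adjacent (mem_Ici.2 hx)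
    (mem_Ici.2 (by linarith : (0:ℝ) ≤ y)) hsx' hsy'
  rw [div_le_div_iff₀ (by linarith) (by linarith)] at h
  rw [div_mul_eq_mul_div, ← sub_le_iff_le_add', le_div_iff₀ hyx]
  nlinarith

/-- Outside a chord interval, a convex function lies above the chord line. -/
lemma stmt0_chord_outside {f : ℝ → ℝ} (hf : ConvexOn ℝ (Ici 0) f) {x y s : ℝ}
    (hx : (0:ℝ) ≤ x) (hxy : x < y) (hs : (0:ℝ) ≤ s) (hout : s ≤ x ∨ y ≤ s) :
    f x + (f y - f x) / (y - x) * (s - x) ≤ f s := by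
  have hyx : (0:ℝ) < y - x := by linarith
  rcases hout with h1 | h1
  · rcases eq_or_lt_of_le h1 with h1' | hsx
    · rw [h1']; simp
    · have h := hf.slope_mono_adjacent (mem_Ici.2 hs)
        (mem_Ici.2 (by linarith : (0:ℝ) ≤ y)) hsx (by linarith : x < y)
      rw [div_le_div_iff₀ (by linarith) hyx] at h
      rw [div_mul_eq_mul_div, ← le_sub_iff_add_le', div_le_iff₀ hyx]
      nlinarith
  · rcases eq_or_lt_of_le h1 with h1' | hsy
    · rw [← h1', div_mul_cancel₀ _ (ne_of_gt hyx)]; linarith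
    · have h := hf.slope_mono_adjacent (mem_Ici.2 hx) (mem_Ici.2 hs) hxy hsy
      rw [div_le_div_iff₀ hyx (by linarith)] at h
      rw [div_mul_eq_mul_div, ← le_sub_iff_add_le', div_le_iff₀ hyx]
      nlinarith

/-- A convex function on `[0,∞)` attaining its minimum at `0` is continuous (from the right)
at `0`. -/
lemma stmt0_cont_zero {f : ℝ → ℝ} (hf : ConvexOn ℝ (Ici 0) f)
    (hlb : ∀ s ∈ Ici (0:ℝ), f 0 ≤ f s) : ContinuousWithinAt f (Ici 0) 0 := by
  have hub : ∀ s ∈ Icc (0:ℝ) 1, f s ≤ f 0 + (f 1 - f 0) / (1 - 0) * (s - 0) :=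
    fun s hs => stmt0_chord_inside hf le_rfl one_pos hs.1 hs.2
  have h2 : Filter.Tendsto (fun s : ℝ => f 0 + (f 1 - f 0) / (1 - 0) * (s - 0))
      (nhdsWithin 0 (Ici 0)) (nhds (f 0)) := by
    have hc : Continuous fun s : ℝ => f 0 + (f 1 - f 0) / (1 - 0) * (s - 0) := by continuity
    have h3 := (hc.tendsto 0).mono_left (nhdsWithin_le_nhds (s := Ici (0:ℝ)))
    simpa using h3
  have hIcc : Icc (0:ℝ) 1 ∈ nhdsWithin (0:ℝ) (Ici 0) := by
    have : Ici (0:ℝ) ∩ Iic 1 ∈ nhdsWithin (0:ℝ) (Ici 0) :=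
      Filter.inter_mem self_mem_nhdsWithin (mem_nhdsWithin_of_mem_nhds (Iic_mem_nhds one_pos))
    rwa [Ici_inter_Iic] at this
  refine tendsto_of_tendsto_of_tendsto_of_le_of_le' tendsto_const_nhds h2 ?_ ?_
  · exact eventually_mem_nhdsWithin.mono fun s hs => hlb s hs
  · exact Filter.eventually_of_mem hIcc fun s hs => hub s hs

set_option maxHeartbeats 1000000 in
theorem stmt0
    (w gcm : ℝ → ℝ)
    (hw_cont : ContinuousOn w (Ici 0))
    (hw_mono : MonotoneOn w (Ici 0))
    (hw_nonneg : ∀ s ∈ Ici (0:ℝ), 0 ≤ w s)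
    (hgcm_conv : ConvexOn ℝ (Ici 0) gcm)
    (hgcm_le : ∀ s ∈ Ici (0:ℝ), gcm s ≤ w s)
    (hgcm_greatest : ∀ g : ℝ → ℝ, ConvexOn ℝ (Ici 0) g →
      (∀ s ∈ Ici (0:ℝ), g s ≤ w s) → ∀ s ∈ Ici (0:ℝ), g s ≤ gcm s) :
    ∀ t : ℝ, 0 ≤ t → ∃ a ∈ Icc (0:ℝ) t,
      (∃ c d : ℝ, ∀ s ∈ Icc a t, gcm s = c * s + d) ∧ w a = gcm a := by
  -- the constant `w 0` is a convex minorant of `w`, hence below `gcm`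
  have hlb : ∀ s ∈ Ici (0:ℝ), w 0 ≤ gcm s := by
    intro s hs
    exact hgcm_greatest (fun _ => w 0) (convexOn_const _ (convex_Ici 0))
      (fun u hu => hw_mono self_mem_Ici hu (mem_Ici.1 hu)) s hs
  have h00 : gcm 0 = w 0 := le_antisymm (hgcm_le 0 self_mem_Ici) (hlb 0 self_mem_Ici)
  have hgcm_cont : ContinuousOn gcm (Ici 0) := by
    intro s hs
    rcases eq_or_lt_of_le (mem_Ici.1 hs) with h | h
    · rw [← h]
      exact stmt0_cont_zero hgcm_conv (fun u hu => by rw [h00]; exact hlb u hu)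
    · have hint := hgcm_conv.continuousOn_interior
      rw [interior_Ici] at hint
      exact ((hint s h).continuousAt (Ioi_mem_nhds h)).continuousWithinAt
  intro t ht
  by_cases hwt : w t = gcm t
  · exact ⟨t, ⟨ht, le_refl t⟩, ⟨0, gcm t, fun s hs => by
      have hst : s = t := le_antisymm hs.2 hs.1
      rw [hst]; ring⟩, hwt⟩
  have htlt : gcm t < w t := (hgcm_le t ht).lt_of_ne fun h => hwt h.symm
  have ht0 : 0 < t := by
    rcases ht.lt_or_eq with h | h
    · exact h
    · exfalso; rw [← h, h00] at htlt; exact lt_irrefl _ htlt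
  -- the set of secant slopes to the left of `t`
  set K : Set ℝ := (fun s => (gcm t - gcm s) / (t - s)) '' Ico 0 t with hKdef
  have hKne : K.Nonempty := ⟨_, ⟨0, ⟨le_refl 0, ht0⟩, rfl⟩⟩
  have hKbdd : BddAbove K := by
    refine ⟨(gcm (t+1) - gcm t) / (t + 1 - t), ?_⟩
    rintro u ⟨v, ⟨hv0, hvt⟩, rfl⟩
    exact hgcm_conv.slope_mono_adjacent (mem_Ici.2 hv0)
      (mem_Ici.2 (by linarith)) hvt (by linarith)
  set k := sSup K with hkdef
  -- the support line `L s = gcm t + k * (s - t)` lies below `gcm`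
  have hL : ∀ s ∈ Ici (0:ℝ), gcm t + k * (s - t) ≤ gcm s := by
    intro s hs
    rcases lt_trichotomy s t with h | h | h
    · have h1 : (gcm t - gcm s) / (t - s) ≤ k :=
        le_csSup hKbdd ⟨s, ⟨mem_Ici.1 hs, h⟩, rfl⟩
      have h2 : (0:ℝ) < t - s := by linarith
      rw [div_le_iff₀ h2] at h1
      nlinarith
    · rw [h]; simp
    · have h1 : k ≤ (gcm s - gcm t) / (s - t) := by
        apply csSup_le hKne
        rintro u ⟨v, ⟨hv0, hvt⟩, rfl⟩
        exact hgcm_conv.slope_mono_adjacent (mem_Ici.2 hv0) hs hvt h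
      have h2 : (0:ℝ) < s - t := by linarith
      rw [le_div_iff₀ h2] at h1
      nlinarith
  clear_value k
  -- the contact set of `gcm` with the support line
  set A : Set ℝ := Icc 0 t ∩ (fun s => gcm s - (gcm t + k * (s - t))) ⁻¹' {0} with hAdef
  have htA : t ∈ A := ⟨⟨ht, le_refl t⟩, by simp⟩
  have hAne : A.Nonempty := ⟨t, htA⟩
  have hAbdd : BddBelow A := ⟨0, fun s hs => hs.1.1⟩
  have hAclosed : IsClosed A := by
    refine ContinuousOn.preimage_isClosed_of_isClosed ?_ isClosed_Icc isClosed_singleton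
    exact (hgcm_cont.mono Icc_subset_Ici_self).sub (Continuous.continuousOn (by continuity))
  set a := sInf A with hadef
  have haA : a ∈ A := hAclosed.csInf_mem hAne hAbdd
  have ha0 : 0 ≤ a := haA.1.1
  have hat : a ≤ t := haA.1.2
  have haL : gcm a = gcm t + k * (a - t) := by
    have := haA.2
    simp only [mem_preimage, mem_singleton_iff] at this
    linarith [this]
  clear_value A a
  -- `gcm` is affine on `[a, t]`
  have haffine : ∀ s ∈ Icc a t, gcm s = k * s + (gcm t - k * t) := by
    intro s hs
    have hs0 : (0:ℝ) ≤ s := le_trans ha0 hs.1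
    have h1 : gcm t + k * (s - t) ≤ gcm s := hL s (mem_Ici.2 hs0)
    have h2 : gcm s ≤ gcm t + k * (s - t) := by
      rcases eq_or_lt_of_le hat with h | h
      · have : s = t := le_antisymm hs.2 (h ▸ hs.1)
        rw [this]; simp
      · have hch := stmt0_chord_inside hgcm_conv ha0 h hs.1 hs.2
        have hslope : (gcm t - gcm a) / (t - a) = k := by
          rw [haL]
          have hta : t - a ≠ 0 := by linarith
          field_simp
          ring
        rw [hslope] at hch
        rw [haL] at hch
        linarith [hch]
    have : gcm s = gcm t + k * (s - t) := le_antisymm h2 h1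
    rw [this]; ring
  refine ⟨a, ⟨ha0, hat⟩, ⟨k, gcm t - k * t, haffine⟩, ?_⟩
  -- it remains to show `w a = gcm a`
  by_contra hwa
  have hwa' : gcm a < w a := (hgcm_le a (mem_Ici.2 ha0)).lt_of_ne fun h => hwa h.symm
  have ha0' : 0 < a := by
    rcases ha0.lt_or_eq with h | h
    · exact h
    · exfalso; rw [← h, h00] at hwa'; exact lt_irrefl _ hwa'
  set ε := (w a - gcm a) / 4 with hεdef
  have hε : 0 < ε := by rw [hεdef]; linarith
  clear_value ε
  -- continuity at `a`
  have hwa_cont : ContinuousAt w a :=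
    (hw_cont a (mem_Ici.2 ha0)).continuousAt (Ici_mem_nhds ha0')
  have hga_cont : ContinuousAt gcm a :=
    (hgcm_cont a (mem_Ici.2 ha0)).continuousAt (Ici_mem_nhds ha0')
  have hev1 : ∀ᶠ s in nhds a, 2 * ε < w s - gcm s := by
    have h1 : Filter.Tendsto (fun s => w s - gcm s) (nhds a) (nhds (w a - gcm a)) :=
      hwa_cont.sub hga_cont
    exact h1.eventually (eventually_gt_nhds (by rw [hεdef]; linarith))
  have hev2 : ∀ᶠ s in nhds a, |gcm s - gcm a| < ε := by
    have h1 : Filter.Tendsto (fun s => gcm s - gcm a) (nhds a) (nhds (gcm a - gcm a)) :=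
      hga_cont.sub tendsto_const_nhds
    have h2 : Filter.Tendsto (fun s => |gcm s - gcm a|) (nhds a) (nhds |gcm a - gcm a|) :=
      h1.abs
    exact h2.eventually (eventually_lt_nhds (by simp [hε]))
  obtain ⟨δ, hδ, hδball⟩ := Metric.eventually_nhds_iff.1 (hev1.and hev2)
  set r := min (δ / 2) a with hrdef
  have hr0 : 0 < r := lt_min (by linarith) ha0'
  have hrδ : r < δ := lt_of_le_of_lt (min_le_left _ _) (by linarith)
  have hra : r ≤ a := min_le_right _ _
  clear_value r
  set x := a - r with hxdef
  set y := a + r with hydef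
  have hx0 : (0:ℝ) ≤ x := by rw [hxdef]; linarith
  have hxy : x < y := by rw [hxdef, hydef]; linarith
  clear_value x y
  have hnear : ∀ s, x ≤ s → s ≤ y → (2 * ε < w s - gcm s ∧ |gcm s - gcm a| < ε) := by
    intro s hs1 hs2
    apply hδball
    rw [Real.dist_eq, abs_lt]
    constructor <;> [skip; skip] <;> rw [hxdef] at hs1 <;> rw [hydef] at hs2 <;> linarith
  -- the chord of `gcm` over `[x, y]`
  set m := (gcm y - gcm x) / (y - x) with hmdef
  clear_value m
  set g : ℝ → ℝ := fun s => max (gcm s) (gcm x + m * (s - x)) with hgdef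
  clear_value g
  have hgconv : ConvexOn ℝ (Ici 0) g := by
    rw [hgdef]
    have haff : ConvexOn ℝ (Ici (0:ℝ)) (fun s => gcm x + m * (s - x)) := by
      have hEq : (fun s : ℝ => gcm x + m * (s - x)) = fun s => m * s + (gcm x - m * x) := by
        funext s; ring
      rw [hEq]
      exact stmt0_affine_convexOn m (gcm x - m * x)
    exact hgcm_conv.sup haff
  have hgle : ∀ s ∈ Ici (0:ℝ), g s ≤ w s := by
    intro s hs
    rw [hgdef]
    by_cases hin : x ≤ s ∧ s ≤ y
    · have h1 := hnear s hin.1 hin.2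
      have h2 := (hnear x le_rfl hxy.le).2
      have h3 := (hnear y hxy.le le_rfl).2
      have hLm : gcm x + m * (s - x) ≤ max (gcm x) (gcm y) := by
        rcases le_or_gt 0 m with hm | hm
        · have : gcm x + m * (s - x) ≤ gcm x + m * (y - x) := by nlinarith [hin.2]
          have hmy : gcm x + m * (y - x) = gcm y := by
            rw [hmdef, div_mul_cancel₀ _ (by linarith : y - x ≠ 0)]; ring
          exact le_trans this (hmy ▸ le_max_right _ _)
        · have : gcm x + m * (s - x) ≤ gcm x := by nlinarith [hin.1]
          exact le_trans this (le_max_left _ _)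
      have hmax : max (gcm x) (gcm y) < gcm a + ε := by
        rw [max_lt_iff]
        rw [abs_lt] at h2 h3
        constructor <;> linarith
      have hws : gcm a + ε < w s := by
        obtain ⟨hA, hB⟩ := h1
        rw [abs_lt] at hB
        linarith
      exact max_le (hgcm_le s hs) (by linarith)
    · push_neg at hin
      have hout : s ≤ x ∨ y ≤ s := by
        rcases le_or_gt s x with h | h
        · exact Or.inl h
        · exact Or.inr (hin h.le).le
      have hco := stmt0_chord_outside hgcm_conv hx0 hxy (mem_Ici.1 hs) hout
      rw [← hmdef] at hco
      exact max_le (hgcm_le s hs) (le_trans hco (hgcm_le s hs))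
  have hgg : ∀ s ∈ Ici (0:ℝ), gcm x + m * (s - x) ≤ gcm s := by
    intro s hs
    have := hgcm_greatest g hgconv hgle s hs
    rw [hgdef] at this
    exact le_trans (le_max_right _ _) this
  -- hence `gcm` agrees with its chord on `[x, y]`
  have hxychord : ∀ s, x ≤ s → s ≤ y → gcm s = gcm x + m * (s - x) := by
    intro s h1 h2
    have hA := stmt0_chord_inside hgcm_conv hx0 hxy h1 h2
    have hB := hgg s (mem_Ici.2 (le_trans hx0 h1))
    rw [← hmdef] at hA
    linarith
  -- slope comparison gives `k ≤ m`
  have haxy1 : x ≤ a := by rw [hxdef]; linarith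
  have haxy2 : a ≤ y := by rw [hydef]; linarith
  have hgcma : gcm a = gcm x + m * (a - x) := hxychord a haxy1 haxy2
  have hgcmy : gcm y = gcm x + m * (y - x) := hxychord y hxy.le le_rfl
  have hkm : k ≤ m := by
    have h1 : gcm t + k * (y - t) ≤ gcm y := hL y (mem_Ici.2 (by linarith))
    rw [hgcmy] at h1
    -- gcm x + m*(a-x) = gcm a = gcm t + k*(a-t)
    have h2 : gcm x + m * (a - x) = gcm t + k * (a - t) := by rw [← hgcma, haL]
    have hya : y - a = r := by rw [hydef]; ring
    nlinarith [h1, h2, hr0]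
  -- therefore `x` is also a contact point: contradiction with minimality of `a`
  have hxL : gcm x = gcm t + k * (x - t) := by
    have h1 : gcm t + k * (x - t) ≤ gcm x := hL x (mem_Ici.2 hx0)
    have h2 : gcm x ≤ gcm t + k * (x - t) := by
      have hgx : gcm x = gcm a - m * (a - x) := by rw [hgcma]; ring
      have hax : a - x = r := by rw [hxdef]; ring
      rw [hgx, haL, hax]
      have : k * r ≤ m * r := by nlinarith [hkm, hr0]
      have hxa : x - t = (a - t) - r := by rw [hxdef]; ring
      rw [hxa]; nlinarith
    linarith
  have hxA : x ∈ A := by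
    rw [hAdef]
    constructor
    · exact ⟨hx0, by linarith⟩
    · simp only [mem_preimage, mem_singleton_iff]
      rw [hxL]; ring
  have : a ≤ x := by rw [hadef]; exact csInf_le hAbdd hxA
  rw [hxdef] at this
  linarith
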